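/- Let g : ℝ → ℝ satisfy g(0) = 0, g'(t) = (1 + 2 g(t)^2)^(-1/2) for t ≥ 0, extended oddly. Then there exists a constant C > 0 such that |g(t)| ≥ C|t| whenever |t| ≤ 1 and |g(t)| ≥ C|t|^(1/2) whenever |t| ≥ 1. -/

import Mathlib

theorem stmt_5 (g : ℝ → ℝ) (hg0 : g 0 = 0)
    (hgd : ∀ t : ℝ, 0 ≤ t → HasDerivAt g (1 / Real.sqrt (1 + 2 * g t ^ 2)) t)
    (hodd : ∀ t : ℝ, g (-t) = - g t) :
    ∃ C : ℝ, 0 < C ∧ (∀ t : ℝ, |t| ≤ 1 → C * |t| ≤ |g t|) ∧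
      (∀ t : ℝ, 1 ≤ |t| → C * |t| ^ ((1 : ℝ) / 2) ≤ |g t|) := by
  -- basic facts about the sqrt expression
  have hs1 : ∀ x : ℝ, (1:ℝ) ≤ Real.sqrt (1 + 2 * x ^ 2) := by
    intro x
    have h := Real.sqrt_le_sqrt (show (1:ℝ) ≤ 1 + 2 * x ^ 2 by nlinarith)
    simpa using h
  have hspos : ∀ x : ℝ, (0:ℝ) < Real.sqrt (1 + 2 * x ^ 2) :=
    fun x => lt_of_lt_of_le one_pos (hs1 x)
  -- key : for positive t, 0 < g t ≤ t
  have key : ∀ t : ℝ, 0 < t → 0 < g t ∧ g t ≤ t := by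
    intro t ht
    obtain ⟨c, _, hslope⟩ := exists_hasDerivAt_eq_slope g
      (fun x => 1 / Real.sqrt (1 + 2 * g x ^ 2)) ht
      (fun x hx => ((hgd x hx.1).continuousAt).continuousWithinAt)
      (fun x hx => hgd x (le_of_lt hx.1))
    simp only [hg0, sub_zero] at hslope
    set s := Real.sqrt (1 + 2 * g c ^ 2) with hs
    have h1 : (1:ℝ) ≤ s := hs1 _
    have h0 : (0:ℝ) < s := hspos _
    have hgt : g t = t / s := by
      field_simp at hslope
      field_simp
      linarith
    constructor
    · rw [hgt]; positivity
    · rw [hgt, div_le_iff₀ h0]; nlinarith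
  -- lower bound : g t ≥ t / sqrt (1 + 2 t^2) for t > 0
  have lower : ∀ t : ℝ, 0 < t → t / Real.sqrt (1 + 2 * t ^ 2) ≤ g t := by
    intro t ht
    obtain ⟨c, hc, hslope⟩ := exists_hasDerivAt_eq_slope g
      (fun x => 1 / Real.sqrt (1 + 2 * g x ^ 2)) ht
      (fun x hx => ((hgd x hx.1).continuousAt).continuousWithinAt)
      (fun x hx => hgd x (le_of_lt hx.1))
    simp only [hg0, sub_zero] at hslope
    obtain ⟨hgc0, hgc⟩ := key c hc.1
    have hct : c < t := hc.2
    have hmono : Real.sqrt (1 + 2 * g c ^ 2) ≤ Real.sqrt (1 + 2 * t ^ 2) :=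
      Real.sqrt_le_sqrt (by nlinarith)
    have h0c : (0:ℝ) < Real.sqrt (1 + 2 * g c ^ 2) := hspos _
    have h0t : (0:ℝ) < Real.sqrt (1 + 2 * t ^ 2) := hspos _
    have hgt : g t = t / Real.sqrt (1 + 2 * g c ^ 2) := by
      field_simp at hslope
      field_simp
      linarith
    rw [hgt]
    exact div_le_div_of_nonneg_left (le_of_lt ht) h0c hmono
  -- bound on [0,1] : g t ≥ t/2
  have bd1 : ∀ t : ℝ, 0 < t → t ≤ 1 → t / 2 ≤ g t := by
    intro t ht ht1
    have h := lower t ht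
    have hle : Real.sqrt (1 + 2 * t ^ 2) ≤ 2 := by
      have h4 := Real.sqrt_le_sqrt (show 1 + 2 * t ^ 2 ≤ (4:ℝ) by nlinarith)
      rwa [show (4:ℝ) = 2^2 by norm_num, Real.sqrt_sq (by norm_num : (0:ℝ) ≤ 2)] at h4
    calc t / 2 ≤ t / Real.sqrt (1 + 2 * t ^ 2) :=
          div_le_div_of_nonneg_left (le_of_lt ht) (hspos t) hle
      _ ≤ g t := h
  -- g t ≥ 1/2 for t ≥ 1
  have half : ∀ t : ℝ, 1 ≤ t → (1:ℝ)/2 ≤ g t := by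
    intro t ht
    have h := lower t (by linarith)
    have h0t : (0:ℝ) < Real.sqrt (1 + 2 * t ^ 2) := hspos _
    have hsq : Real.sqrt (1 + 2 * t ^ 2) ^ 2 = 1 + 2 * t ^ 2 :=
      Real.sq_sqrt (by nlinarith)
    have : Real.sqrt (1 + 2 * t ^ 2) ≤ 2 * t := by
      nlinarith [h0t, hsq]
    calc (1:ℝ)/2 = t / (2*t) := by field_simp
      _ ≤ t / Real.sqrt (1 + 2 * t ^ 2) :=
          div_le_div_of_nonneg_left (by linarith) h0t this
      _ ≤ g t := h
  -- bound for t ≥ 1 : g t ^ 2 ≥ t / 4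
  have bd2 : ∀ t : ℝ, 1 ≤ t → t / 4 ≤ g t ^ 2 := by
    intro t ht
    rcases eq_or_lt_of_le ht with heq | hlt
    · have := half t ht
      nlinarith
    · obtain ⟨c, hc, hslope⟩ := exists_hasDerivAt_eq_slope (fun x => g x ^ 2)
        (fun x => 2 * g x * (1 / Real.sqrt (1 + 2 * g x ^ 2))) hlt
        (fun x hx => (((hgd x (by linarith [hx.1])).continuousAt).pow 2).continuousWithinAt)
        (fun x hx => by
          have := ((hgd x (by linarith [hx.1.le])).fun_pow 2)
          simpa [mul_comm, mul_assoc, mul_left_comm] using this)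
      have hgc : (1:ℝ)/2 ≤ g c := half c hc.1.le
      have h0c : (0:ℝ) < Real.sqrt (1 + 2 * g c ^ 2) := hspos _
      have hsq : Real.sqrt (1 + 2 * g c ^ 2) ^ 2 = 1 + 2 * g c ^ 2 :=
        Real.sq_sqrt (by nlinarith)
      -- derivative at c is at least 1/4
      have hd : (1:ℝ)/4 ≤ 2 * g c * (1 / Real.sqrt (1 + 2 * g c ^ 2)) := by
        rw [mul_one_div, le_div_iff₀ h0c]
        nlinarith [h0c, hsq]
      rw [hslope] at hd
      have hg1 : (1:ℝ)/2 ≤ g 1 := half 1 le_rfl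
      have ht1 : (0:ℝ) < t - 1 := by linarith
      rw [le_div_iff₀ ht1] at hd
      nlinarith
  refine ⟨1/2, by norm_num, ?_, ?_⟩
  · -- small t
    have main : ∀ t : ℝ, 0 ≤ t → t ≤ 1 → 1/2 * t ≤ |g t| := by
      intro t ht ht1
      rcases eq_or_lt_of_le ht with heq | hlt
      · simp [← heq, hg0]
      · have := bd1 t hlt ht1
        have hpos := (key t hlt).1
        rw [abs_of_pos hpos]; linarith
    intro t ht
    rcases le_or_gt 0 t with h | h
    · rw [abs_of_nonneg h] at ht ⊢; exact main t h ht
    · rw [abs_of_neg h] at ht ⊢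
      have : g (-t) = - g t := hodd t
      have habs : |g t| = |g (-t)| := by rw [this, abs_neg]
      rw [habs]
      rw [← abs_of_pos (show (0:ℝ) < -t by linarith), abs_of_nonneg (by linarith : (0:ℝ) ≤ -t)]
      exact main (-t) (by linarith) ht
  · -- large t
    have main : ∀ t : ℝ, 1 ≤ t → 1/2 * t ^ ((1:ℝ)/2) ≤ |g t| := by
      intro t ht
      have h2 := bd2 t ht
      have hpos := (key t (by linarith)).1
      rw [abs_of_pos hpos]
      have hrw : t ^ ((1:ℝ)/2) = Real.sqrt t := (Real.sqrt_eq_rpow t).symm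
      rw [hrw]
      have hsq : Real.sqrt t ^ 2 = t := Real.sq_sqrt (by linarith)
      nlinarith [Real.sqrt_nonneg t, hsq, hpos]
    intro t ht
    rcases le_or_gt 0 t with h | h
    · rw [abs_of_nonneg h] at ht ⊢; exact main t ht
    · rw [abs_of_neg h] at ht ⊢
      have : g (-t) = - g t := hodd t
      have habs : |g t| = |g (-t)| := by rw [this, abs_neg]
      rw [habs]
      exact main (-t) ht
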